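/- The function ζ(x) = (x · log x)/(x² − 1) is strictly decreasing on the interval (1, ∞). -/

import Mathlib

open Real Set

/-- Key inequality: for `x > 1`, `x² − 1 < (x² + 1)·log x`. -/
lemma key_ineq : ∀ x : ℝ, 1 < x → x ^ 2 - 1 < (x ^ 2 + 1) * Real.log x := by
  have hmono : StrictMonoOn (fun x : ℝ => (x ^ 2 + 1) * Real.log x - (x ^ 2 - 1))
      (Set.Ici 1) := by
    apply strictMonoOn_of_deriv_pos (convex_Ici 1)
    · apply ContinuousOn.sub
      · exact (continuousOn_pow 2 |>.add continuousOn_const).mul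
          (Real.continuousOn_log.mono (by intro x hx; simp at hx ⊢; linarith))
      · exact (continuousOn_pow 2).sub continuousOn_const
    · intro x hx
      rw [interior_Ici] at hx
      have hx1 : (1:ℝ) < x := hx
      have hx0 : (0:ℝ) < x := by linarith
      have hd : HasDerivAt (fun x : ℝ => (x ^ 2 + 1) * Real.log x - (x ^ 2 - 1))
          ((2 * x) * Real.log x + (x ^ 2 + 1) * x⁻¹ - 2 * x) x := by
        have h1 : HasDerivAt (fun x : ℝ => x ^ 2 + 1) (2 * x) x := by
          simpa using ((hasDerivAt_pow 2 x).add_const 1)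
        have h2 : HasDerivAt Real.log x⁻¹ x := Real.hasDerivAt_log (ne_of_gt hx0)
        have h3 : HasDerivAt (fun x : ℝ => x ^ 2 - 1) (2 * x) x := by
          simpa using ((hasDerivAt_pow 2 x).sub_const 1)
        exact (h1.mul h2).sub h3
      rw [hd.deriv]
      -- log x > 1 - 1/x
      have hlog : 1 - x⁻¹ < Real.log x := by
        have := Real.log_lt_sub_one_of_pos (x := x⁻¹) (by positivity)
          (by intro h; rw [inv_eq_one] at h; linarith)
        rw [Real.log_inv] at this
        linarith
      have h2x : (0:ℝ) < 2 * x := by linarith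
      have hstep : (2 * x) * (1 - x⁻¹) < (2 * x) * Real.log x :=
        (mul_lt_mul_iff_right₀ h2x).mpr hlog
      have hinv : x * x⁻¹ = 1 := mul_inv_cancel₀ (ne_of_gt hx0)
      have hsq : (x - 1) ^ 2 * x⁻¹ > 0 := mul_pos (pow_pos (by linarith) 2) (inv_pos.mpr hx0)
      nlinarith [hsq, hinv, sq_nonneg (x - 1)]
  intro x hx
  have := hmono (Set.self_mem_Ici) (Set.mem_Ici.mpr (le_of_lt hx)) hx
  simp at this
  linarith

theorem zeta_strictAntiOn :
    StrictAntiOn (fun x : ℝ => x * Real.log x / (x ^ 2 - 1)) (Set.Ioi 1) := by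
  apply strictAntiOn_of_deriv_neg (convex_Ioi 1)
  · apply ContinuousOn.div
    · exact (continuousOn_id.mul (Real.continuousOn_log.mono (by
        intro x hx; simp at hx ⊢; linarith)))
    · exact (continuousOn_pow 2).sub continuousOn_const
    · intro x hx
      have : (1:ℝ) < x := hx
      nlinarith
  · intro x hx
    rw [interior_Ioi] at hx
    have hx1 : (1:ℝ) < x := hx
    have hx0 : (0:ℝ) < x := by linarith
    have hden : x ^ 2 - 1 > 0 := by nlinarith
    have hd : HasDerivAt (fun x : ℝ => x * Real.log x / (x ^ 2 - 1))
        (((1 * Real.log x + x * x⁻¹) * (x ^ 2 - 1) - x * Real.log x * (2 * x)) /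
          (x ^ 2 - 1) ^ 2) x := by
      have hnum : HasDerivAt (fun x : ℝ => x * Real.log x)
          (1 * Real.log x + x * x⁻¹) x :=
        (hasDerivAt_id x).mul (Real.hasDerivAt_log (ne_of_gt hx0))
      have hden' : HasDerivAt (fun x : ℝ => x ^ 2 - 1) (2 * x) x := by
        simpa using ((hasDerivAt_pow 2 x).sub_const 1)
      exact hnum.div hden' (ne_of_gt hden)
    rw [hd.deriv]
    apply div_neg_of_neg_of_pos _ (by positivity)
    have hinv : x * x⁻¹ = 1 := mul_inv_cancel₀ (ne_of_gt hx0)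
    have := key_ineq x hx1
    nlinarith [this]
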